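/- Fix real parameters m₁, m₂, r₁, r₂, g > 0 satisfying m₁ (r₂² − r₁ (r₁ + r₂)) ≠ m₂ r₁ (r₁ + r₂), m₁ (r₂² − r₁ (r₁ − r₂)) ≠ m₂ r₁ (r₁ − r₂), and m₁ r₁² ≠ m₂ (r₂² − r₁²). Let X₃ = [X₁, X₂]. Then for every z ∈ ℝ⁴, the vectors X₂(z) and X₃(z) are linearly independent in ℝ⁴. -/

import Mathlib

noncomputable section

/-- `Δ(θ) = r₁ r₂ (m₁ + m₂ sin²(θ₁ − θ₂))`. -/
def Δpend (m₁ m₂ r₁ r₂ : ℝ) (z : Fin 4 → ℝ) : ℝ :=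
  r₁ * r₂ * (m₁ + m₂ * Real.sin (z 0 - z 1) ^ 2)

def b₁pend (m₁ m₂ r₁ r₂ : ℝ) (z : Fin 4 → ℝ) : ℝ :=
  m₂ * r₂ * (r₁ * m₂ * Real.cos (z 0 - z 1) - r₂ * m₁)

def b₂pend (m₁ m₂ r₁ r₂ : ℝ) (z : Fin 4 → ℝ) : ℝ :=
  m₂ * r₁ * (r₂ * m₁ * Real.cos (z 0 - z 1) - r₁ * (m₁ + m₂))

def a₁pend (m₁ m₂ r₁ r₂ g : ℝ) (z : Fin 4 → ℝ) : ℝ :=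
  -g * r₂ * (m₂ * Real.sin (z 1) * Real.cos (z 0 - z 1)
      - (m₁ + m₂) * Real.sin (z 0))
  - m₂ * r₂ * Real.sin (z 0 - z 1) *
      (r₁ * Real.cos (z 0 - z 1) * (z 2) ^ 2 + r₂ * (z 3) ^ 2)

def a₂pend (m₁ m₂ r₁ r₂ g : ℝ) (z : Fin 4 → ℝ) : ℝ :=
  -g * r₁ * (m₁ + m₂) * (Real.cos (z 0 - z 1) * Real.sin (z 0) - Real.sin (z 1))
  + r₁ * Real.sin (z 0 - z 1) *
      (r₁ * (m₁ + m₂) * (z 2) ^ 2 + r₂ * m₂ * Real.cos (z 0 - z 1) * (z 3) ^ 2)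

/-- The drift-type vector field `X₁(z) = (Δ(θ) ω₁, Δ(θ) ω₂, a₁(z), a₂(z))`. -/
def X₁pend (m₁ m₂ r₁ r₂ g : ℝ) : (Fin 4 → ℝ) → (Fin 4 → ℝ) :=
  fun z => ![Δpend m₁ m₂ r₁ r₂ z * z 2, Δpend m₁ m₂ r₁ r₂ z * z 3,
    a₁pend m₁ m₂ r₁ r₂ g z, a₂pend m₁ m₂ r₁ r₂ g z]

/-- The control-type vector field `X₂(z) = (0, 0, b₁(θ), b₂(θ))`. -/
def X₂pend (m₁ m₂ r₁ r₂ : ℝ) : (Fin 4 → ℝ) → (Fin 4 → ℝ) :=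
  fun z => ![0, 0, b₁pend m₁ m₂ r₁ r₂ z, b₂pend m₁ m₂ r₁ r₂ z]

/-- The Lie bracket `[X, Y](z) = DY(z)·X(z) − DX(z)·Y(z)` of vector fields. -/
def lieBracket (X Y : (Fin 4 → ℝ) → (Fin 4 → ℝ)) : (Fin 4 → ℝ) → (Fin 4 → ℝ) :=
  fun z => fderiv ℝ Y z (X z) - fderiv ℝ X z (Y z)

/-- `X₃ = [X₁, X₂]`. -/
def X₃pend (m₁ m₂ r₁ r₂ g : ℝ) : (Fin 4 → ℝ) → (Fin 4 → ℝ) :=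
  lieBracket (X₁pend m₁ m₂ r₁ r₂ g) (X₂pend m₁ m₂ r₁ r₂)

/-- `X₄ = [X₂, X₃]`. -/
def X₄pend (m₁ m₂ r₁ r₂ g : ℝ) : (Fin 4 → ℝ) → (Fin 4 → ℝ) :=
  lieBracket (X₂pend m₁ m₂ r₁ r₂) (X₃pend m₁ m₂ r₁ r₂ g)

/-- The family `F = {X₁, X₂, X₃, X₄}`. -/
def Fpend (m₁ m₂ r₁ r₂ g : ℝ) : Set ((Fin 4 → ℝ) → (Fin 4 → ℝ)) :=
  {X₁pend m₁ m₂ r₁ r₂ g, X₂pend m₁ m₂ r₁ r₂,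
   X₃pend m₁ m₂ r₁ r₂ g, X₄pend m₁ m₂ r₁ r₂ g}

/-- Iterated Lie brackets `[Y₁,[…[Y_{k−1}, Y_k]…]]` of members of `F`
(including the members of `F` themselves). -/
inductive IterBracket (F : Set ((Fin 4 → ℝ) → (Fin 4 → ℝ))) :
    ((Fin 4 → ℝ) → (Fin 4 → ℝ)) → Prop
  | base {X} : X ∈ F → IterBracket F X
  | bracket {X Y} : X ∈ F → IterBracket F Y → IterBracket F (lieBracket X Y)

/-- `F` is bracket-generating on `ℝ⁴`. -/
def BracketGenerating (F : Set ((Fin 4 → ℝ) → (Fin 4 → ℝ))) : Prop :=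
  ∀ z : Fin 4 → ℝ,
    Submodule.span ℝ {v : Fin 4 → ℝ | ∃ B, IterBracket F B ∧ v = B z} = ⊤

end


open ContinuousLinearMap in
lemma sin_hasFDerivAt_aux (z : Fin 4 → ℝ) :
    HasFDerivAt (fun z : Fin 4 → ℝ => Real.sin (z 0 - z 1))
      (Real.cos (z 0 - z 1) • ((proj 0 : (Fin 4 → ℝ) →L[ℝ] ℝ) - proj 1)) z :=
  (Real.hasDerivAt_sin _).comp_hasFDerivAt z ((hasFDerivAt_apply 0 z).sub (hasFDerivAt_apply 1 z))

lemma fderiv_X1c_aux (m₁ m₂ r₁ r₂ : ℝ) (z w : Fin 4 → ℝ) (hw0 : w 0 = 0) (hw1 : w 1 = 0)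
    (j : Fin 4) :
    fderiv ℝ (fun z : Fin 4 → ℝ => Δpend m₁ m₂ r₁ r₂ z * z j) z w
      = Δpend m₁ m₂ r₁ r₂ z * w j := by
  have hΔ := (((((hasDerivAt_pow 2 (Real.sin (z 0 - z 1))).comp_hasFDerivAt z
      (sin_hasFDerivAt_aux z)).const_mul m₂).const_add m₁).const_mul (r₁*r₂))
  have h : HasFDerivAt (fun z : Fin 4 → ℝ => Δpend m₁ m₂ r₁ r₂ z * z j) _ z :=
    hΔ.mul (hasFDerivAt_apply j z)
  rw [h.fderiv]
  simp [hw0, hw1, Δpend]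

lemma fderiv_proj_aux (f : (Fin 4 → ℝ) → (Fin 4 → ℝ)) (z v : Fin 4 → ℝ) (i : Fin 4)
    (hf : DifferentiableAt ℝ f z) :
    fderiv ℝ f z v i = fderiv ℝ (fun z => f z i) z v := by
  rw [(hasFDerivAt_pi'.1 hf.hasFDerivAt i).fderiv]; rfl

lemma X₁_diff_aux (m₁ m₂ r₁ r₂ g : ℝ) (z : Fin 4 → ℝ) :
    DifferentiableAt ℝ (X₁pend m₁ m₂ r₁ r₂ g) z := by
  rw [differentiableAt_pi]
  intro i
  fin_cases i <;> simp [X₁pend, Δpend, a₁pend, a₂pend] <;> fun_prop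

lemma X₂_diff_aux (m₁ m₂ r₁ r₂ : ℝ) (z : Fin 4 → ℝ) :
    DifferentiableAt ℝ (X₂pend m₁ m₂ r₁ r₂) z := by
  rw [differentiableAt_pi]
  intro i
  fin_cases i <;> simp [X₂pend, b₁pend, b₂pend] <;> fun_prop

lemma X₃_apply0_aux (m₁ m₂ r₁ r₂ g : ℝ) (z : Fin 4 → ℝ) :
    X₃pend m₁ m₂ r₁ r₂ g z 0
      = -(Δpend m₁ m₂ r₁ r₂ z * b₁pend m₁ m₂ r₁ r₂ z) := by
  have h1 : fderiv ℝ (X₂pend m₁ m₂ r₁ r₂) z (X₁pend m₁ m₂ r₁ r₂ g z) 0 = 0 := by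
    rw [fderiv_proj_aux _ _ _ _ (X₂_diff_aux m₁ m₂ r₁ r₂ z)]
    simp only [X₂pend, Matrix.cons_val_zero]
    simp
  have h2 : fderiv ℝ (X₁pend m₁ m₂ r₁ r₂ g) z (X₂pend m₁ m₂ r₁ r₂ z) 0
      = Δpend m₁ m₂ r₁ r₂ z * b₁pend m₁ m₂ r₁ r₂ z := by
    rw [fderiv_proj_aux _ _ _ _ (X₁_diff_aux m₁ m₂ r₁ r₂ g z)]
    simp only [X₁pend, Matrix.cons_val_zero]
    rw [fderiv_X1c_aux m₁ m₂ r₁ r₂ z _ (by simp [X₂pend]) (by simp [X₂pend]) 2]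
    simp [X₂pend]
  simp only [X₃pend, lieBracket, Pi.sub_apply, h1, h2]
  ring

lemma X₃_apply1_aux (m₁ m₂ r₁ r₂ g : ℝ) (z : Fin 4 → ℝ) :
    X₃pend m₁ m₂ r₁ r₂ g z 1
      = -(Δpend m₁ m₂ r₁ r₂ z * b₂pend m₁ m₂ r₁ r₂ z) := by
  have h1 : fderiv ℝ (X₂pend m₁ m₂ r₁ r₂) z (X₁pend m₁ m₂ r₁ r₂ g z) 1 = 0 := by
    rw [fderiv_proj_aux _ _ _ _ (X₂_diff_aux m₁ m₂ r₁ r₂ z)]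
    simp only [X₂pend, Matrix.cons_val_one, Matrix.head_cons]
    simp
  have h2 : fderiv ℝ (X₁pend m₁ m₂ r₁ r₂ g) z (X₂pend m₁ m₂ r₁ r₂ z) 1
      = Δpend m₁ m₂ r₁ r₂ z * b₂pend m₁ m₂ r₁ r₂ z := by
    rw [fderiv_proj_aux _ _ _ _ (X₁_diff_aux m₁ m₂ r₁ r₂ g z)]
    simp only [X₁pend, Matrix.cons_val_one, Matrix.head_cons, Matrix.cons_val_zero]
    rw [fderiv_X1c_aux m₁ m₂ r₁ r₂ z _ (by simp [X₂pend]) (by simp [X₂pend]) 3]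
    simp [X₂pend]
  simp only [X₃pend, lieBracket, Pi.sub_apply, h1, h2]
  ring

lemma b_ne_zero_aux (m₁ m₂ r₁ r₂ : ℝ) (hm₁ : 0 < m₁) (hm₂ : 0 < m₂)
    (hr₁ : 0 < r₁) (hr₂ : 0 < r₂) (z : Fin 4 → ℝ) (t : ℝ)
    (hb1 : t * b₁pend m₁ m₂ r₁ r₂ z = 0) (hb2 : t * b₂pend m₁ m₂ r₁ r₂ z = 0) :
    t = 0 := by
  by_contra ht
  have h1 : b₁pend m₁ m₂ r₁ r₂ z = 0 := by
    rcases mul_eq_zero.1 hb1 with h | h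
    · exact absurd h ht
    · exact h
  have h2 : b₂pend m₁ m₂ r₁ r₂ z = 0 := by
    rcases mul_eq_zero.1 hb2 with h | h
    · exact absurd h ht
    · exact h
  set c := Real.cos (z 0 - z 1) with hc
  have e1 : r₁ * m₂ * c = r₂ * m₁ := by
    have := mul_ne_zero hm₂.ne' hr₂.ne'
    simp only [b₁pend, ← hc] at h1
    rcases mul_eq_zero.1 h1 with h | h
    · exact absurd h this
    · linarith
  have e2 : r₂ * m₁ * c = r₁ * (m₁ + m₂) := by
    have := mul_ne_zero hm₂.ne' hr₁.ne'
    simp only [b₂pend, ← hc] at h2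
    rcases mul_eq_zero.1 h2 with h | h
    · exact absurd h this
    · linarith
  have hcc : c ^ 2 ≤ 1 := Real.cos_sq_le_one (z 0 - z 1)
  have e1c : (r₁ * m₂ * c) * c = (r₂ * m₁) * c := by rw [e1]
  nlinarith [mul_pos hr₁ hm₁, mul_pos hr₁ hm₂, e1c, e2, hcc]

/-- Under the stated genericity conditions, the vector fields `X₂` and
`X₃ = [X₁, X₂]` are linearly independent at every point of `ℝ⁴`. -/
theorem X₂_X₃_linearIndependent
    (m₁ m₂ r₁ r₂ g : ℝ) (hm₁ : 0 < m₁) (hm₂ : 0 < m₂)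
    (hr₁ : 0 < r₁) (hr₂ : 0 < r₂) (hg : 0 < g)
    (h1 : m₁ * (r₂ ^ 2 - r₁ * (r₁ + r₂)) ≠ m₂ * r₁ * (r₁ + r₂))
    (h2 : m₁ * (r₂ ^ 2 - r₁ * (r₁ - r₂)) ≠ m₂ * r₁ * (r₁ - r₂))
    (h3 : m₁ * r₁ ^ 2 ≠ m₂ * (r₂ ^ 2 - r₁ ^ 2)) :
    ∀ z : Fin 4 → ℝ,
      LinearIndependent ℝ ![X₂pend m₁ m₂ r₁ r₂ z, X₃pend m₁ m₂ r₁ r₂ g z] := by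
  intro z
  have hΔpos : 0 < Δpend m₁ m₂ r₁ r₂ z := by
    have : 0 ≤ m₂ * Real.sin (z 0 - z 1) ^ 2 := by positivity
    unfold Δpend
    nlinarith [mul_pos hr₁ hr₂]
  rw [LinearIndependent.pair_iff]
  intro s t hst
  have e0 := congrFun hst 0
  have e1 := congrFun hst 1
  have e2 := congrFun hst 2
  have e3 := congrFun hst 3
  simp only [Pi.add_apply, Pi.smul_apply, smul_eq_mul, Pi.zero_apply,
    X₂pend, Matrix.cons_val_zero, Matrix.cons_val_one, Matrix.head_cons,
    Matrix.cons_val_two, Matrix.tail_cons, Matrix.cons_val_three,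
    X₃_apply0_aux, X₃_apply1_aux] at e0 e1 e2 e3
  have ht : t = 0 := by
    have hb1 : (-(t * Δpend m₁ m₂ r₁ r₂ z)) * b₁pend m₁ m₂ r₁ r₂ z = 0 := by ring_nf; linarith [e0]
    have hb2 : (-(t * Δpend m₁ m₂ r₁ r₂ z)) * b₂pend m₁ m₂ r₁ r₂ z = 0 := by ring_nf; linarith [e1]
    have := b_ne_zero_aux m₁ m₂ r₁ r₂ hm₁ hm₂ hr₁ hr₂ z _ hb1 hb2
    have htΔ : t * Δpend m₁ m₂ r₁ r₂ z = 0 := by linarith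
    rcases mul_eq_zero.1 htΔ with h | h
    · exact h
    · exact absurd h hΔpos.ne'
  subst ht
  simp only [zero_mul, add_zero, mul_zero] at e2 e3
  exact ⟨b_ne_zero_aux m₁ m₂ r₁ r₂ hm₁ hm₂ hr₁ hr₂ z s e2 e3, rfl⟩
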